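/- Let T be an ergodic invertible measure-preserving transformation of a probability space, and suppose for some a ∈ (0,1) and some sequence kᵢ → ∞, the Koopman operators satisfy T̂^{kᵢ} → aI + (1−a)T̂ in the weak operator topology. Then T is weakly mixing, i.e., the only eigenfunctions of T̂ in L² are the constant functions. -/

import Mathlib

open MeasureTheory Filter Topology
open scoped InnerProductSpace

/-- Let `T` be an ergodic invertible measure-preserving transformation of a
probability space and `Uop` its Koopman operator on `L²(μ)`.  If for some `a ∈ (0,1)` and a
sequence `kᵢ → ∞` we have `Uop^{kᵢ} → aI + (1−a)Uop` in the weak operator topology, then every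
eigenfunction of `Uop` is a.e. constant (i.e. `T` is weakly mixing). -/
lemma aux_stmt11 (a r i : ℝ) (ha : 0 < a) (ha1 : a < 1)
    (h1 : r ^ 2 + i ^ 2 = 1) (h2 : (a + (1 - a) * r) ^ 2 + ((1 - a) * i) ^ 2 = 1) :
    r = 1 ∧ i = 0 := by
  have h5 : (1 - a) ^ 2 * (r ^ 2 + i ^ 2) = (1 - a) ^ 2 * 1 := by rw [h1]
  have h6 : 2 * a * (1 - a) * (r - 1) = 0 := by linear_combination h2 - h5
  have h1a : 0 < 1 - a := by linarith
  have hane : 2 * a * (1 - a) ≠ 0 := by positivity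
  have hr : r = 1 := by
    have := (mul_eq_zero.mp h6).resolve_left hane
    linarith
  refine ⟨hr, ?_⟩
  have hi2 : i ^ 2 = 0 := by nlinarith [h1, hr]
  exact (pow_eq_zero_iff two_ne_zero).mp hi2

theorem stmt11
    {X : Type*} [MeasurableSpace X] (μ : Measure X) [IsProbabilityMeasure μ]
    (T : X ≃ᵐ X) (hT : MeasurePreserving T μ μ) (hTerg : Ergodic T μ)
    (Uop : Lp ℂ 2 μ →L[ℂ] Lp ℂ 2 μ) (hUopu : Uop ∈ unitary (Lp ℂ 2 μ →L[ℂ] Lp ℂ 2 μ))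
    (hKoop : ∀ f : Lp ℂ 2 μ, (Uop f : X → ℂ) =ᵐ[μ] fun x => f (T x))
    (a : ℝ) (ha : 0 < a) (ha1 : a < 1)
    (k : ℕ → ℕ) (hk : Tendsto k atTop atTop)
    (hweak : ∀ f g : Lp ℂ 2 μ, Tendsto (fun i => ⟪(Uop ^ k i) f, g⟫_ℂ) atTop
      (𝓝 ((a : ℂ) * ⟪f, g⟫_ℂ + ((1 - a : ℝ) : ℂ) * ⟪Uop f, g⟫_ℂ))) :
    ∀ (f : Lp ℂ 2 μ) (c : ℂ), Uop f = c • f → f ≠ 0 →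
      ∃ κ : ℂ, (f : X → ℂ) =ᵐ[μ] fun _ => κ := by
  intro f c hcf hf0
  -- ‖f‖² ≠ 0
  have hN : (⟪f, f⟫_ℂ) ≠ 0 := inner_self_ne_zero.mpr hf0
  -- |c| = 1
  have hcb : ‖c‖ = 1 := by
    have h1 : ‖Uop f‖ = ‖f‖ := ContinuousLinearMap.norm_map_of_mem_unitary hUopu f
    rw [hcf, norm_smul] at h1
    have hfn : ‖f‖ ≠ 0 := norm_ne_zero_iff.mpr hf0
    field_simp at h1
    exact h1
  set d : ℂ := starRingEnd ℂ c with hd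
  have hdb : ‖d‖ = 1 := by simpa [hd] using hcb
  -- Uop^n f = c^n • f
  have hpow : ∀ n : ℕ, (Uop ^ n) f = c ^ n • f := by
    intro n
    induction n with
    | zero => simp
    | succ n ih =>
      rw [pow_succ, ContinuousLinearMap.mul_apply, hcf, ContinuousLinearMap.map_smul, ih, smul_smul,
        mul_comm, ← pow_succ]
  -- inner products
  have hinner : ∀ n : ℕ, ⟪(Uop ^ n) f, f⟫_ℂ = d ^ n * ⟪f, f⟫_ℂ := by
    intro n
    rw [hpow n, inner_smul_left, hd, map_pow]
  have hU1 : ⟪Uop f, f⟫_ℂ = d * ⟪f, f⟫_ℂ := by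
    rw [hcf, inner_smul_left, hd]
  -- limit of d^{k i}
  have hlim : Tendsto (fun i => d ^ k i) atTop (𝓝 ((a : ℂ) + ((1 - a : ℝ) : ℂ) * d)) := by
    have h1 := hweak f f
    simp only [hinner, hU1] at h1
    have h2 := h1.mul_const (⟪f, f⟫_ℂ)⁻¹
    have h3 : (fun i => d ^ k i * ⟪f, f⟫_ℂ * (⟪f, f⟫_ℂ)⁻¹) = fun i => d ^ k i := by
      funext i; field_simp
    rw [h3] at h2
    convert h2 using 2
    field_simp
  -- the limit has norm 1
  have hnorm : ‖(a : ℂ) + ((1 - a : ℝ) : ℂ) * d‖ = 1 := by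
    have h1 : Tendsto (fun i => ‖d ^ k i‖) atTop (𝓝 ‖(a : ℂ) + ((1 - a : ℝ) : ℂ) * d‖) :=
      hlim.norm
    have h2 : (fun i => ‖d ^ k i‖) = fun _ => 1 := by
      funext i; rw [norm_pow, hdb, one_pow]
    rw [h2] at h1
    exact (tendsto_nhds_unique tendsto_const_nhds h1).symm
  -- deduce d = 1, hence c = 1
  have hd1 : d = 1 := by
    have hre : d.re ^ 2 + d.im ^ 2 = 1 := by
      have h := Complex.sq_norm d
      rw [Complex.normSq_apply, hdb] at h
      nlinarith [h]
    have h2 : ((a : ℂ) + ((1 - a : ℝ) : ℂ) * d).re = a + (1 - a) * d.re := by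
      simp [Complex.add_re, Complex.mul_re]
    have h3 : ((a : ℂ) + ((1 - a : ℝ) : ℂ) * d).im = (1 - a) * d.im := by
      simp [Complex.add_im, Complex.mul_im]
    have h4 : (a + (1 - a) * d.re) ^ 2 + ((1 - a) * d.im) ^ 2 = 1 := by
      have h := Complex.sq_norm ((a : ℂ) + ((1 - a : ℝ) : ℂ) * d)
      rw [Complex.normSq_apply, hnorm, h2, h3] at h
      nlinarith [h]
    obtain ⟨hre1, him0⟩ := aux_stmt11 a d.re d.im ha ha1 hre h4
    exact Complex.ext (by simpa using hre1) (by simpa using him0)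
  have hc1 : c = 1 := by
    have := congrArg (starRingEnd ℂ) hd1
    simpa [hd] using this
  -- f is T-invariant a.e.
  have hinv : ((f : X → ℂ) ∘ T) =ᵐ[μ] (f : X → ℂ) := by
    have h1 := hKoop f
    rw [hcf, hc1, one_smul] at h1
    exact h1.symm
  obtain ⟨κ, hκ⟩ := hTerg.ae_eq_const_of_ae_eq_comp_ae (Lp.aestronglyMeasurable f) hinv
  exact ⟨κ, hκ⟩
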